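/- arXiv:1906.06899 — 4 statements merged into one kernel-verified Lean document; each statement's English description precedes it below -/
import Mathlib

section
/- Let L ≥ 1 be an integer and let x, y ∈ ℝ^T be nonzero vectors. Then cos_L(x, y) = 1 if and only if there exist ℓ ∈ {0,…,L−1} and a scalar α > 0 such that x = α S_ℓᵀ y or y = α S_ℓᵀ x. -/
open Matrix BigOperators

noncomputable section

/-- The `T × T` shift matrix `S_τ` with ones on the `τ`-th upper diagonal. -/
def shiftMat (T τ : ℕ) : Matrix (Fin T) (Fin T) ℝ :=
  Matrix.of fun i j => if (j : ℕ) = (i : ℕ) + τ then 1 else 0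

/-- Right shift with zero padding: `(S_τᵀ x)_j = x_{j-τ}`. -/
def shift {T : ℕ} (τ : ℕ) (x : Fin T → ℝ) : Fin T → ℝ :=
  (shiftMat T τ)ᵀ.mulVec x

/-- Euclidean dot product. -/
def dot {T : ℕ} (u v : Fin T → ℝ) : ℝ := ∑ i, u i * v i

/-- Euclidean norm. -/
def enorm {T : ℕ} (u : Fin T → ℝ) : ℝ := Real.sqrt (∑ i, u i ^ 2)

open Classical in
/-- Cosine of the angle between two vectors, with the convention that it is `0`
if either vector is zero. -/
def vcos {T : ℕ} (u v : Fin T → ℝ) : ℝ :=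
  if u = 0 ∨ v = 0 then 0 else dot u v / (_root_.enorm u * _root_.enorm v)

/-- The `L`-shift cosine similarity `cos_L`. -/
def cosL {T : ℕ} (L : ℕ) (u v : Fin T → ℝ) : ℝ :=
  ⨆ ℓ : Fin L, max (vcos (shift (ℓ : ℕ) u) v) (vcos u (shift (ℓ : ℕ) v))


lemma dot_eq_inner {T : ℕ} (u v : Fin T → ℝ) :
    dot u v = inner ℝ ((WithLp.equiv 2 (Fin T → ℝ)).symm u) ((WithLp.equiv 2 (Fin T → ℝ)).symm v) := by
  simp [dot, PiLp.inner_apply, RCLike.inner_apply, mul_comm]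

lemma enorm_eq_norm {T : ℕ} (u : Fin T → ℝ) :
    _root_.enorm u = ‖(WithLp.equiv 2 (Fin T → ℝ)).symm u‖ := by
  simp [_root_.enorm, EuclideanSpace.norm_eq, Real.norm_eq_abs, sq_abs]

lemma equiv_symm_eq_zero_iff {T : ℕ} (u : Fin T → ℝ) :
    (WithLp.equiv 2 (Fin T → ℝ)).symm u = 0 ↔ u = 0 := by
  constructor <;> intro h
  · funext i; exact congrArg (fun w : WithLp 2 (Fin T → ℝ) => w i) h
  · rw [h]; rfl

lemma vcos_le_one {T : ℕ} (u v : Fin T → ℝ) : vcos u v ≤ 1 := by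
  unfold vcos
  split
  · norm_num
  · rename_i h
    push_neg at h
    rw [dot_eq_inner, enorm_eq_norm, enorm_eq_norm]
    exact (abs_le.mp (abs_real_inner_div_norm_mul_norm_le_one _ _)).2

lemma vcos_eq_one_iff {T : ℕ} (u v : Fin T → ℝ) :
    vcos u v = 1 ↔ u ≠ 0 ∧ ∃ r : ℝ, 0 < r ∧ v = r • u := by
  unfold vcos
  split
  · rename_i h
    constructor
    · intro h1; norm_num at h1
    · rintro ⟨hu, r, hr, hv⟩
      rcases h with h | h
      · exact absurd h hu
      · have h0 : r • u = 0 := by rw [← hv, h]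
        exact absurd ((smul_eq_zero.mp h0).resolve_left hr.ne') hu
  · rename_i h
    push_neg at h
    rw [dot_eq_inner, enorm_eq_norm, enorm_eq_norm,
      real_inner_div_norm_mul_norm_eq_one_iff]
    constructor
    · rintro ⟨hu, r, hr, hv⟩
      refine ⟨h.1, r, hr, ?_⟩
      funext i; exact congrArg (fun w : WithLp 2 (Fin T → ℝ) => w i) hv
    · rintro ⟨hu, r, hr, hv⟩
      refine ⟨by simpa [equiv_symm_eq_zero_iff] using hu, r, hr, ?_⟩
      rw [hv]; rfl

/-- for nonzero `x, y`, `cos_L(x,y) = 1` iff one is a positive multiple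
of a shift (of length `< L`) of the other. -/
theorem cosL_eq_one_iff (T L : ℕ) (hL : 1 ≤ L) (x y : Fin T → ℝ)
    (hx : x ≠ 0) (hy : y ≠ 0) :
    cosL L x y = 1 ↔
      ∃ ℓ : ℕ, ℓ < L ∧ ∃ α : ℝ, 0 < α ∧ (x = α • shift ℓ y ∨ y = α • shift ℓ x) := by
  haveI : Nonempty (Fin L) := ⟨⟨0, hL⟩⟩
  set f : Fin L → ℝ := fun ℓ => max (vcos (shift (ℓ : ℕ) x) y) (vcos x (shift (ℓ : ℕ) y)) with hf
  have hsup : cosL L x y = ⨆ ℓ, f ℓ := rfl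
  have hle : ∀ ℓ, f ℓ ≤ 1 := fun ℓ => max_le (vcos_le_one _ _) (vcos_le_one _ _)
  have hbdd : BddAbove (Set.range f) := Set.Finite.bddAbove (Set.finite_range f)
  constructor
  · intro h
    obtain ⟨ℓ, hℓ⟩ := Finite.exists_max f
    have h1 : (⨆ ℓ, f ℓ) = 1 := by rw [← hsup]; exact h
    have h2 : (1:ℝ) ≤ f ℓ := by rw [← h1]; exact ciSup_le hℓ
    have hfℓ : f ℓ = 1 := le_antisymm (hle ℓ) h2
    rcases max_cases (vcos (shift (ℓ:ℕ) x) y) (vcos x (shift (ℓ:ℕ) y)) with ⟨he, _⟩ | ⟨he, _⟩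
    · have h3 : vcos (shift (ℓ:ℕ) x) y = 1 := by rw [← he]; exact hfℓ
      obtain ⟨hsx, r, hr, hv⟩ := (vcos_eq_one_iff _ _).mp h3
      exact ⟨ℓ, ℓ.isLt, r, hr, Or.inr hv⟩
    · have h3 : vcos x (shift (ℓ:ℕ) y) = 1 := by rw [← he]; exact hfℓ
      obtain ⟨hsx, r, hr, hv⟩ := (vcos_eq_one_iff _ _).mp h3
      refine ⟨ℓ, ℓ.isLt, r⁻¹, by positivity, Or.inl ?_⟩
      rw [hv, smul_smul, inv_mul_cancel₀ hr.ne', one_smul]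
  · rintro ⟨ℓ, hℓ, α, hα, hcase⟩
    refine le_antisymm (by rw [hsup]; exact ciSup_le hle) ?_
    rw [hsup]
    rcases hcase with hc | hc
    · have hs0 : shift ℓ y ≠ 0 := by
        intro h0; apply hx; rw [hc, h0, smul_zero]
      have h3 : vcos x (shift ℓ y) = 1 := by
        rw [vcos_eq_one_iff]
        exact ⟨hx, α⁻¹, by positivity, by rw [hc, smul_smul, inv_mul_cancel₀ hα.ne', one_smul]⟩
      have h4 : (1:ℝ) ≤ f ⟨ℓ, hℓ⟩ := by
        rw [hf]; simpa using le_max_of_le_right (le_of_eq h3.symm)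
      exact h4.trans (le_ciSup hbdd ⟨ℓ, hℓ⟩)
    · have hs0 : shift ℓ x ≠ 0 := by
        intro h0; apply hy; rw [hc, h0, smul_zero]
      have h3 : vcos (shift ℓ x) y = 1 := by
        rw [vcos_eq_one_iff]
        exact ⟨hs0, α, hα, hc⟩
      have h4 : (1:ℝ) ≤ f ⟨ℓ, hℓ⟩ := by
        rw [hf]; simpa using le_max_of_le_left (le_of_eq h3.symm)
      exact h4.trans (le_ciSup hbdd ⟨ℓ, hℓ⟩)

end
end

section
/- Let y_1, y_2, e_1, e_2 ∈ ℝ^T with y_1 ≠ 0 and y_2 ≠ 0, let θ = cos(y_1, y_2) > 0, and let 0 < ε < 1/2 satisfy ‖e_1‖₂ ≤ ε ‖y_1‖₂ and ‖e_2‖₂ ≤ ε ‖y_2‖₂. Then θ − 35ε ≤ cos(y_1 + e_1, y_2 + e_2) ≤ θ + 35ε. -/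
open Matrix BigOperators

noncomputable section

set_option maxHeartbeats 1000000 in
lemma key_arith (θ ε n1 n2 m1 m2 d D : ℝ)
    (hθ1 : θ ≤ 1) (hθ0 : 0 < θ) (hε0 : 0 < ε) (hε1 : ε < 1/2)
    (hn1 : 0 < n1) (hn2 : 0 < n2)
    (hd : d = θ * (n1 * n2))
    (hm1l : (1-ε)*n1 ≤ m1) (hm1u : m1 ≤ (1+ε)*n1)
    (hm2l : (1-ε)*n2 ≤ m2) (hm2u : m2 ≤ (1+ε)*n2)
    (hDl : d - (2*ε+ε^2)*(n1*n2) ≤ D) (hDu : D ≤ d + (2*ε+ε^2)*(n1*n2)) :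
    θ - 35*ε ≤ D/(m1*m2) ∧ D/(m1*m2) ≤ θ + 35*ε := by
  have hm1 : 0 < m1 := lt_of_lt_of_le (by nlinarith) hm1l
  have hm2 : 0 < m2 := lt_of_lt_of_le (by nlinarith) hm2l
  have hmm : 0 < m1 * m2 := mul_pos hm1 hm2
  have h12 : ((1-ε)*n1)*((1-ε)*n2) ≤ m1*m2 :=
    mul_le_mul hm1l hm2l (by nlinarith) hm1.le
  have h12u : m1*m2 ≤ ((1+ε)*n1)*((1+ε)*n2) :=
    mul_le_mul hm1u hm2u (by positivity) (by positivity)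
  have hnn : 0 < n1 * n2 := mul_pos hn1 hn2
  constructor
  · rw [le_div_iff₀ hmm]
    rcases le_or_gt θ (35*ε) with hc | hc
    · -- θ - 35ε ≤ 0
      have hpoly : 71*ε + θ*ε - 35*ε^2 ≤ 33 + 2*θ := by nlinarith
      have h1 : (θ - 35*ε) * (m1*m2) ≤ (θ-35*ε) * (((1-ε)*n1)*((1-ε)*n2)) := by
        nlinarith [mul_nonneg (show (0:ℝ) ≤ 35*ε - θ by linarith) (show (0:ℝ) ≤ m1*m2 - ((1-ε)*n1)*((1-ε)*n2) by linarith)]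
      have h2 : 0 ≤ (n1*n2) * (ε*(33 + 2*θ - 71*ε - θ*ε + 35*ε^2)) :=
        mul_nonneg hnn.le (mul_nonneg hε0.le (by linarith))
      nlinarith [h1, h2]
    · have hpoly : 0 ≤ 33 + 69*ε - 2*θ - θ*ε + 35*ε^2 := by nlinarith
      have h1 : (θ - 35*ε) * (m1*m2) ≤ (θ-35*ε) * (((1+ε)*n1)*((1+ε)*n2)) := by
        nlinarith [mul_nonneg (show (0:ℝ) ≤ θ - 35*ε by linarith) (show (0:ℝ) ≤ ((1+ε)*n1)*((1+ε)*n2) - m1*m2 by linarith)]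
      have h2 : 0 ≤ (n1*n2) * (ε*(33 + 69*ε - 2*θ - θ*ε + 35*ε^2)) :=
        mul_nonneg hnn.le (mul_nonneg hε0.le hpoly)
      nlinarith [h1, h2]
  · rw [div_le_iff₀ hmm]
    have hpoly : 0 ≤ 33 - 2*θ - 71*ε + θ*ε + 35*ε^2 := by
      have hid : (33:ℝ) - 2*θ - 71*ε + θ*ε + 35*ε^2
          = 35*(ε-1/2)^2 + (22.25 - 35*ε) + (1-θ)*(2-ε) := by ring
      have h1 : 0 ≤ 35*(ε-1/2)^2 := by positivity
      have h2 : (0:ℝ) ≤ 22.25 - 35*ε := by norm_num; linarith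
      have h3 : 0 ≤ (1-θ)*(2-ε) := mul_nonneg (by linarith) (by linarith)
      linarith
    have h1 : 0 ≤ (θ+35*ε) * (m1*m2 - ((1-ε)*n1)*((1-ε)*n2)) :=
      mul_nonneg (by linarith) (by linarith)
    have h2 : 0 ≤ (n1*n2) * (ε*(33 - 2*θ - 71*ε + θ*ε + 35*ε^2)) :=
      mul_nonneg hnn.le (mul_nonneg hε0.le hpoly)
    linarith only [h1, h2, hDu, hd]
open scoped RealInnerProductSpace

def emb {T : ℕ} (u : Fin T → ℝ) : EuclideanSpace ℝ (Fin T) := (WithLp.equiv 2 _).symm u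
lemma emb_add {T : ℕ} (u v : Fin T → ℝ) : emb (u + v) = emb u + emb v := rfl
lemma dot_eq {T : ℕ} (u v : Fin T → ℝ) : dot u v = inner ℝ (emb u) (emb v) := by
  simp [dot, emb, PiLp.inner_apply, RCLike.inner_apply, mul_comm]
lemma enorm_eq {T : ℕ} (u : Fin T → ℝ) : _root_.enorm u = ‖emb u‖ := by
  simp [_root_.enorm, emb, EuclideanSpace.norm_eq, Real.norm_eq_abs, sq_abs]
lemma emb_ne {T : ℕ} {u : Fin T → ℝ} (h : u ≠ 0) : emb u ≠ 0 := by simpa [emb] using h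


/-- Corollary: linear cosine perturbation: if `θ = cos(y₁,y₂) > 0` and the
perturbations are relatively bounded by `ε < 1/2`, then
`θ - 35ε ≤ cos(y₁+e₁, y₂+e₂) ≤ θ + 35ε`. -/
theorem cos_perturbation_linear (T : ℕ) (y₁ y₂ e₁ e₂ : Fin T → ℝ)
    (hy₁ : y₁ ≠ 0) (hy₂ : y₂ ≠ 0) (θ ε : ℝ)
    (hθdef : θ = vcos y₁ y₂) (hθ : 0 < θ) (hε0 : 0 < ε) (hε1 : ε < 1 / 2)
    (he₁ : _root_.enorm e₁ ≤ ε * _root_.enorm y₁) (he₂ : _root_.enorm e₂ ≤ ε * _root_.enorm y₂) :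
    θ - 35 * ε ≤ vcos (y₁ + e₁) (y₂ + e₂) ∧
      vcos (y₁ + e₁) (y₂ + e₂) ≤ θ + 35 * ε := by
  set Y₁ := emb y₁ with hY₁
  set Y₂ := emb y₂
  set E₁ := emb e₁
  set E₂ := emb e₂
  have hn1 : (0:ℝ) < ‖Y₁‖ := norm_pos_iff.mpr (emb_ne hy₁)
  have hn2 : (0:ℝ) < ‖Y₂‖ := norm_pos_iff.mpr (emb_ne hy₂)
  have hE1 : ‖E₁‖ ≤ ε * ‖Y₁‖ := by simpa [enorm_eq] using he₁
  have hE2 : ‖E₂‖ ≤ ε * ‖Y₂‖ := by simpa [enorm_eq] using he₂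
  -- θ as inner product ratio
  have hθeq : θ = (inner ℝ Y₁ Y₂ : ℝ) / (‖Y₁‖ * ‖Y₂‖) := by
    rw [hθdef, vcos, if_neg (by tauto), dot_eq, enorm_eq, enorm_eq]
  have hθ1 : θ ≤ 1 := by
    rw [hθeq]
    exact div_le_one_of_le₀ (real_inner_le_norm Y₁ Y₂) (by positivity)
  have hd : (inner ℝ Y₁ Y₂ : ℝ) = θ * (‖Y₁‖ * ‖Y₂‖) := by
    rw [hθeq]; field_simp
  -- norm bounds for the perturbed vectors
  have hm1u : ‖Y₁ + E₁‖ ≤ (1+ε) * ‖Y₁‖ := by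
    calc ‖Y₁ + E₁‖ ≤ ‖Y₁‖ + ‖E₁‖ := norm_add_le _ _
    _ ≤ (1+ε) * ‖Y₁‖ := by linarith
  have hm1l : (1-ε) * ‖Y₁‖ ≤ ‖Y₁ + E₁‖ := by
    have h : ‖(Y₁ + E₁) - E₁‖ ≤ ‖Y₁ + E₁‖ + ‖E₁‖ := norm_sub_le _ _
    simp only [add_sub_cancel_right] at h
    linarith
  have hm2u : ‖Y₂ + E₂‖ ≤ (1+ε) * ‖Y₂‖ := by
    calc ‖Y₂ + E₂‖ ≤ ‖Y₂‖ + ‖E₂‖ := norm_add_le _ _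
    _ ≤ (1+ε) * ‖Y₂‖ := by linarith
  have hm2l : (1-ε) * ‖Y₂‖ ≤ ‖Y₂ + E₂‖ := by
    have h : ‖(Y₂ + E₂) - E₂‖ ≤ ‖Y₂ + E₂‖ + ‖E₂‖ := norm_sub_le _ _
    simp only [add_sub_cancel_right] at h
    linarith
  -- perturbed vectors nonzero
  have hu : y₁ + e₁ ≠ 0 := by
    intro h
    have : ‖Y₁ + E₁‖ = 0 := by rw [← emb_add]; simp [h, emb]
    nlinarith
  have hv : y₂ + e₂ ≠ 0 := by
    intro h
    have : ‖Y₂ + E₂‖ = 0 := by rw [← emb_add]; simp [h, emb]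
    nlinarith
  -- inner product expansion bound
  have hinner : (inner ℝ (Y₁ + E₁) (Y₂ + E₂) : ℝ)
      = (inner ℝ Y₁ Y₂ : ℝ) + (inner ℝ Y₁ E₂ : ℝ) + (inner ℝ E₁ Y₂ : ℝ) + (inner ℝ E₁ E₂ : ℝ) := by
    simp [inner_add_left, inner_add_right]; ring
  have hb1 : |(inner ℝ Y₁ E₂ : ℝ)| ≤ ε * (‖Y₁‖ * ‖Y₂‖) := by
    calc |(inner ℝ Y₁ E₂ : ℝ)| ≤ ‖Y₁‖ * ‖E₂‖ := abs_real_inner_le_norm _ _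
    _ ≤ ε * (‖Y₁‖ * ‖Y₂‖) := by nlinarith
  have hb2 : |(inner ℝ E₁ Y₂ : ℝ)| ≤ ε * (‖Y₁‖ * ‖Y₂‖) := by
    calc |(inner ℝ E₁ Y₂ : ℝ)| ≤ ‖E₁‖ * ‖Y₂‖ := abs_real_inner_le_norm _ _
    _ ≤ ε * (‖Y₁‖ * ‖Y₂‖) := by nlinarith
  have hb3 : |(inner ℝ E₁ E₂ : ℝ)| ≤ ε^2 * (‖Y₁‖ * ‖Y₂‖) := by
    calc |(inner ℝ E₁ E₂ : ℝ)| ≤ ‖E₁‖ * ‖E₂‖ := abs_real_inner_le_norm _ _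
    _ ≤ ε^2 * (‖Y₁‖ * ‖Y₂‖) := by nlinarith [norm_nonneg E₁, norm_nonneg E₂]
  have hDl : (inner ℝ Y₁ Y₂ : ℝ) - (2*ε+ε^2)*(‖Y₁‖*‖Y₂‖) ≤ (inner ℝ (Y₁ + E₁) (Y₂ + E₂) : ℝ) := by
    rw [hinner]
    have := abs_le.mp hb1; have := abs_le.mp hb2; have := abs_le.mp hb3
    linarith [this.1]
  have hDu : (inner ℝ (Y₁ + E₁) (Y₂ + E₂) : ℝ) ≤ (inner ℝ Y₁ Y₂ : ℝ) + (2*ε+ε^2)*(‖Y₁‖*‖Y₂‖) := by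
    rw [hinner]
    have := abs_le.mp hb1; have := abs_le.mp hb2; have := abs_le.mp hb3
    linarith [this.2]
  have hmain := key_arith θ ε ‖Y₁‖ ‖Y₂‖ ‖Y₁ + E₁‖ ‖Y₂ + E₂‖ (inner ℝ Y₁ Y₂ : ℝ)
    (inner ℝ (Y₁ + E₁) (Y₂ + E₂) : ℝ) hθ1 hθ hε0 hε1 hn1 hn2 hd hm1l hm1u hm2l hm2u hDl hDu
  have hvcos : vcos (y₁ + e₁) (y₂ + e₂)
      = (inner ℝ (Y₁ + E₁) (Y₂ + E₂) : ℝ) / (‖Y₁ + E₁‖ * ‖Y₂ + E₂‖) := by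
    rw [vcos, if_neg (by tauto), dot_eq, enorm_eq, enorm_eq, emb_add, emb_add]
  rw [hvcos]
  exact hmain


end
end

section
/- Let V ∈ ℝ_+^{N×R} have no zero column, let M ∈ ℝ_+^{R×(T−R)}, let Π be a T×T permutation matrix, and set X = V [I_R M] Π (horizontal concatenation of the R×R identity and M). Assume X has no zero column. Let D_X ∈ ℝ^{T×T} and D_V ∈ ℝ^{R×R} be the diagonal matrices whose j-th diagonal entries are ‖X[:,j]‖₁^{−1} and ‖V[:,j]‖₁^{−1}, respectively. Then X D_X = (V D_V) G' where G' = D_V^{−1} [I_R M] Π D_X is entrywise nonnegative, every column of G' sums to 1, and G' = [I_R M'] Π for some M' ∈ ℝ_+^{R×(T−R)}; in particular, column normalization preserves the separable structure. -/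
open Matrix BigOperators

noncomputable section

/-- The 1-norm of the `j`-th column of a matrix. -/
def cn1 {m n : ℕ} (A : Matrix (Fin m) (Fin n) ℝ) (j : Fin n) : ℝ := ∑ i, |A i j|

/-- The `R × T` matrix `[B M] Π`: the horizontal concatenation of `B : R × R` and
`M : R × (T−R)` with its columns permuted by `π`. -/
def concatPerm {R T : ℕ} (hRT : R ≤ T) (B : Matrix (Fin R) (Fin R) ℝ)
    (M : Matrix (Fin R) (Fin (T - R)) ℝ) (π : Equiv.Perm (Fin T)) :
    Matrix (Fin R) (Fin T) ℝ :=
  Matrix.of fun j t =>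
    Matrix.fromCols B M j
      ((finSumFinEquiv.trans (finCongr (Nat.add_sub_cancel' hRT))).symm (π t))

/-- column normalization preserves the separable structure. If
`X = V [I M] Π` with `V ≥ 0` (no zero column), `M ≥ 0`, `Π` a permutation, and `X` has no
zero column, then `X D_X = (V D_V) G'` where `G' = D_V⁻¹ [I M] Π D_X` is nonnegative with
unit column sums and `G' = [I M'] Π` for some nonnegative `M'`. -/
theorem normalization_preserves_separability (N R T : ℕ) (hRT : R ≤ T)
    (V : Matrix (Fin N) (Fin R) ℝ) (hVpos : ∀ i j, 0 ≤ V i j)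
    (hVcol : ∀ j : Fin R, (fun i => V i j) ≠ 0)
    (M : Matrix (Fin R) (Fin (T - R)) ℝ) (hM : ∀ i j, 0 ≤ M i j)
    (π : Equiv.Perm (Fin T))
    (X : Matrix (Fin N) (Fin T) ℝ) (hX : X = V * concatPerm hRT 1 M π)
    (hXcol : ∀ t : Fin T, (fun i => X i t) ≠ 0)
    (DX : Matrix (Fin T) (Fin T) ℝ)
    (hDX : DX = Matrix.diagonal fun t => (cn1 X t)⁻¹)
    (DV : Matrix (Fin R) (Fin R) ℝ)
    (hDV : DV = Matrix.diagonal fun j => (cn1 V j)⁻¹)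
    (G' : Matrix (Fin R) (Fin T) ℝ)
    (hG' : G' = Matrix.diagonal (fun j => cn1 V j) * concatPerm hRT 1 M π * DX) :
    X * DX = V * DV * G' ∧ (∀ j t, 0 ≤ G' j t) ∧ (∀ t : Fin T, ∑ j, G' j t = 1) ∧
      ∃ M' : Matrix (Fin R) (Fin (T - R)) ℝ, (∀ i j, 0 ≤ M' i j) ∧
        G' = concatPerm hRT 1 M' π := by
  classical
  set e := (finSumFinEquiv.trans (finCongr (Nat.add_sub_cancel' hRT))) with he
  set A := concatPerm hRT 1 M π with hA
  have hAentry : ∀ j t, A j t = Matrix.fromCols 1 M j (e.symm (π t)) := by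
    intro j t; rfl
  have hAnn : ∀ j t, 0 ≤ A j t := by
    intro j t
    rw [hAentry]
    rcases h : e.symm (π t) with k | l
    · simp only [Matrix.fromCols, Matrix.of_apply, Sum.elim_inl, Matrix.one_apply]
      split <;> norm_num
    · simpa [Matrix.fromCols] using hM j l
  have hVc : ∀ j, 0 < cn1 V j := by
    intro j
    have hnn : 0 ≤ cn1 V j := Finset.sum_nonneg fun i _ => abs_nonneg _
    rcases hnn.lt_or_eq with h | h
    · exact h
    · exfalso
      apply hVcol j
      funext i
      have := (Finset.sum_eq_zero_iff_of_nonneg (fun i _ => abs_nonneg (V i j))).mp h.symm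
      simpa using abs_eq_zero.mp (this i (Finset.mem_univ i))
  have hXnn : ∀ i t, 0 ≤ X i t := by
    intro i t
    rw [hX, Matrix.mul_apply]
    exact Finset.sum_nonneg fun j _ => mul_nonneg (hVpos i j) (hAnn j t)
  have hXc : ∀ t, 0 < cn1 X t := by
    intro t
    have hnn : 0 ≤ cn1 X t := Finset.sum_nonneg fun i _ => abs_nonneg _
    rcases hnn.lt_or_eq with h | h
    · exact h
    · exfalso
      apply hXcol t
      funext i
      have := (Finset.sum_eq_zero_iff_of_nonneg (fun i _ => abs_nonneg (X i t))).mp h.symm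
      simpa using abs_eq_zero.mp (this i (Finset.mem_univ i))
  have hkey : ∀ t, cn1 X t = ∑ j, cn1 V j * A j t := by
    intro t
    calc cn1 X t = ∑ i, X i t := by
          unfold cn1
          exact Finset.sum_congr rfl fun i _ => abs_of_nonneg (hXnn i t)
      _ = ∑ i, ∑ j, V i j * A j t := by rw [hX]; rfl
      _ = ∑ j, (∑ i, V i j) * A j t := by
          rw [Finset.sum_comm]
          exact Finset.sum_congr rfl fun j _ => (Finset.sum_mul _ _ _).symm
      _ = ∑ j, cn1 V j * A j t := by
          refine Finset.sum_congr rfl fun j _ => ?_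
          congr 1
          exact Finset.sum_congr rfl fun i _ => (abs_of_nonneg (hVpos i j)).symm
  have hGentry : ∀ j t, G' j t = cn1 V j * A j t * (cn1 X t)⁻¹ := by
    intro j t
    rw [hG', hDX, Matrix.mul_diagonal, Matrix.diagonal_mul]
  refine ⟨?_, ?_, ?_, ?_⟩
  · rw [hDV, hG', hX]
    rw [show V * Matrix.diagonal (fun j => (cn1 V j)⁻¹) *
        (Matrix.diagonal (fun j => cn1 V j) * A * DX)
      = V * ((Matrix.diagonal (fun j => (cn1 V j)⁻¹) *
        Matrix.diagonal (fun j => cn1 V j)) * A) * DX by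
        simp only [Matrix.mul_assoc]]
    rw [Matrix.diagonal_mul_diagonal]
    have : (fun j => (cn1 V j)⁻¹ * cn1 V j) = fun _ : Fin R => (1 : ℝ) := by
      funext j; exact inv_mul_cancel₀ (hVc j).ne'
    rw [this, Matrix.diagonal_one, Matrix.one_mul]
  · intro j t
    rw [hGentry]
    exact mul_nonneg (mul_nonneg (hVc j).le (hAnn j t)) (inv_nonneg.mpr (hXc t).le)
  · intro t
    simp only [hGentry]
    rw [← Finset.sum_mul, ← hkey t]
    exact mul_inv_cancel₀ (hXc t).ne'
  · set M' : Matrix (Fin R) (Fin (T - R)) ℝ :=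
      Matrix.of fun j l => cn1 V j * M j l * (cn1 X (π.symm (e (Sum.inr l))))⁻¹ with hM'
    refine ⟨M', fun j l => mul_nonneg (mul_nonneg (hVc j).le (hM j l))
        (inv_nonneg.mpr (hXc _).le), ?_⟩
    funext j t
    rw [hGentry]
    show cn1 V j * A j t * (cn1 X t)⁻¹ = Matrix.fromCols 1 M' j (e.symm (π t))
    rcases h : e.symm (π t) with k | l
    · have hXt : cn1 X t = cn1 V k := by
        rw [hkey t]
        rw [Finset.sum_eq_single k]
        · rw [hAentry, h]
          simp [Matrix.fromCols, Matrix.one_apply]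
        · intro b _ hb
          rw [hAentry, h]
          simp [Matrix.fromCols, Matrix.one_apply, hb]
        · simp
      rw [hAentry, h, hXt]
      simp only [Matrix.fromCols, Matrix.of_apply, Sum.elim_inl, Matrix.one_apply]
      by_cases hjk : j = k
      · subst hjk
        simp [mul_inv_cancel₀ (hVc j).ne']
      · simp [hjk]
    · have ht : t = π.symm (e (Sum.inr l)) := by
        have : π t = e (Sum.inr l) := by
          rw [← h]; simp
        rw [← this]; simp
      rw [hAentry, h, ht]
      simp [Matrix.fromCols, hM']

end
end

section
/- Let A, Ã ∈ ℝ^{T×R} both have rank R, let b, b̃ ∈ ℝ^T, and set F = A − Ã and e = b − b̃. Let C ⊆ ℝ^R be a convex set, let y ∈ C satisfy A y = b, and let ỹ ∈ C satisfy ‖Ã ỹ − b̃‖₂ ≤ ‖Ã y' − b̃‖₂ for all y' ∈ C (i.e., ỹ minimizes ‖Ã y' − b̃‖₂² over y' ∈ C). If σ_min(A) > σ_max(F), then ‖y − ỹ‖₂ ≤ (σ_max(F) ‖y‖₂ + ‖e‖₂) / (σ_min(A) − σ_max(F)). -/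
open Matrix BigOperators

noncomputable section

/-- The largest singular value of a rectangular matrix, characterized as the supremum of
`‖B v‖₂` over unit vectors `v`. -/
def smax {T R : ℕ} (B : Matrix (Fin T) (Fin R) ℝ) : ℝ :=
  sSup {c : ℝ | ∃ v : Fin R → ℝ, _root_.enorm v = 1 ∧ c = _root_.enorm (B.mulVec v)}

/-- The smallest (`R`-th) singular value of a `T × R` matrix, characterized as the infimum
of `‖B v‖₂` over unit vectors `v`. -/
def smin {T R : ℕ} (B : Matrix (Fin T) (Fin R) ℝ) : ℝ :=
  sInf {c : ℝ | ∃ v : Fin R → ℝ, _root_.enorm v = 1 ∧ c = _root_.enorm (B.mulVec v)}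

/-! ### Auxiliary lemmas -/

lemma enorm_nonneg' {T : ℕ} (u : Fin T → ℝ) : 0 ≤ _root_.enorm u := Real.sqrt_nonneg _

lemma enorm_sq' {T : ℕ} (u : Fin T → ℝ) : _root_.enorm u ^ 2 = ∑ i, u i ^ 2 :=
  Real.sq_sqrt (Finset.sum_nonneg fun _ _ => sq_nonneg _)

lemma dot_le' {T : ℕ} (u v : Fin T → ℝ) : dot u v ≤ _root_.enorm u * _root_.enorm v :=
  Real.sum_mul_le_sqrt_mul_sqrt _ _ _

lemma enorm_pos'' {T : ℕ} {v : Fin T → ℝ} (hv : v ≠ 0) : 0 < _root_.enorm v := by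
  obtain ⟨i, hi⟩ : ∃ i, v i ≠ 0 := by
    by_contra h; push_neg at h; exact hv (funext h)
  exact Real.sqrt_pos.2 <| Finset.sum_pos' (fun j _ => sq_nonneg _)
    ⟨i, Finset.mem_univ i, by positivity⟩

lemma enorm_smul' {T : ℕ} (c : ℝ) (u : Fin T → ℝ) : _root_.enorm (c • u) = |c| * _root_.enorm u := by
  unfold _root_.enorm
  rw [← Real.sqrt_sq_eq_abs, ← Real.sqrt_mul (sq_nonneg c), Finset.mul_sum]
  congr 1
  refine Finset.sum_congr rfl fun i _ => ?_
  simp [Pi.smul_apply, mul_pow]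

lemma expand_sq' {T : ℕ} (u v : Fin T → ℝ) :
    _root_.enorm (u + v) ^ 2 = _root_.enorm u ^ 2 + 2 * dot u v + _root_.enorm v ^ 2 := by
  rw [enorm_sq', enorm_sq', enorm_sq', dot, Finset.mul_sum,
    ← Finset.sum_add_distrib, ← Finset.sum_add_distrib]
  congr 1; ext i; simp only [Pi.add_apply]; ring

lemma enorm_add_le' {T : ℕ} (u v : Fin T → ℝ) : _root_.enorm (u + v) ≤ _root_.enorm u + _root_.enorm v := by
  have h1 : _root_.enorm (u + v) ^ 2 ≤ (_root_.enorm u + _root_.enorm v) ^ 2 := by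
    rw [expand_sq']; nlinarith [dot_le' u v]
  exact le_of_sq_le_sq h1 (add_nonneg (enorm_nonneg' u) (enorm_nonneg' v))

lemma bddAbove_sv {T R : ℕ} (B : Matrix (Fin T) (Fin R) ℝ) :
    BddAbove {c : ℝ | ∃ v : Fin R → ℝ, _root_.enorm v = 1 ∧ c = _root_.enorm (B.mulVec v)} := by
  refine ⟨Real.sqrt (∑ i, ∑ j, B i j ^ 2), ?_⟩
  rintro c ⟨v, hv, rfl⟩
  rw [_root_.enorm]
  apply Real.sqrt_le_sqrt
  have hv2 : ∑ j, v j ^ 2 = 1 := by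
    have := enorm_sq' v; rw [hv] at this; simpa using this.symm
  calc ∑ i, B.mulVec v i ^ 2 = ∑ i, (∑ j, B i j * v j) ^ 2 := by
        simp [Matrix.mulVec, dotProduct]
    _ ≤ ∑ i, (∑ j, B i j ^ 2) * ∑ j, v j ^ 2 := by
        refine Finset.sum_le_sum fun i _ => ?_
        exact Finset.sum_mul_sq_le_sq_mul_sq _ _ _
    _ = ∑ i, ∑ j, B i j ^ 2 := by simp [hv2]

lemma smax_spec {T R : ℕ} (B : Matrix (Fin T) (Fin R) ℝ) (v : Fin R → ℝ) :
    _root_.enorm (B.mulVec v) ≤ smax B * _root_.enorm v := by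
  rcases eq_or_ne v 0 with rfl | hv
  · simp [Matrix.mulVec_zero, _root_.enorm]
  · have hc : 0 < _root_.enorm v := enorm_pos'' hv
    set u : Fin R → ℝ := (_root_.enorm v)⁻¹ • v with hu
    have hu1 : _root_.enorm u = 1 := by
      rw [hu, enorm_smul', abs_of_pos (by positivity)]
      field_simp
    have hmem : _root_.enorm (B.mulVec u) ∈
        {c : ℝ | ∃ w : Fin R → ℝ, _root_.enorm w = 1 ∧ c = _root_.enorm (B.mulVec w)} := ⟨u, hu1, rfl⟩
    have hle : _root_.enorm (B.mulVec u) ≤ smax B := le_csSup (bddAbove_sv B) hmem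
    have hvu : v = _root_.enorm v • u := by
      rw [hu, smul_smul, mul_inv_cancel₀ (ne_of_gt hc), one_smul]
    have key : _root_.enorm (B.mulVec v) = _root_.enorm v * _root_.enorm (B.mulVec u) := by
      conv_lhs => rw [hvu]
      rw [Matrix.mulVec_smul, enorm_smul', abs_of_pos hc]
    calc _root_.enorm (B.mulVec v) = _root_.enorm v * _root_.enorm (B.mulVec u) := key
      _ ≤ _root_.enorm v * smax B := mul_le_mul_of_nonneg_left hle hc.le
      _ = smax B * _root_.enorm v := mul_comm _ _

lemma smin_spec {T R : ℕ} (B : Matrix (Fin T) (Fin R) ℝ) (v : Fin R → ℝ) :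
    smin B * _root_.enorm v ≤ _root_.enorm (B.mulVec v) := by
  rcases eq_or_ne v 0 with rfl | hv
  · simp [Matrix.mulVec_zero, _root_.enorm]
  · have hc : 0 < _root_.enorm v := enorm_pos'' hv
    set u : Fin R → ℝ := (_root_.enorm v)⁻¹ • v with hu
    have hu1 : _root_.enorm u = 1 := by
      rw [hu, enorm_smul', abs_of_pos (by positivity)]
      field_simp
    have hmem : _root_.enorm (B.mulVec u) ∈
        {c : ℝ | ∃ w : Fin R → ℝ, _root_.enorm w = 1 ∧ c = _root_.enorm (B.mulVec w)} := ⟨u, hu1, rfl⟩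
    have hbdd : BddBelow {c : ℝ | ∃ w : Fin R → ℝ, _root_.enorm w = 1 ∧ c = _root_.enorm (B.mulVec w)} :=
      ⟨0, by rintro c ⟨w, _, rfl⟩; exact enorm_nonneg' _⟩
    have hle : smin B ≤ _root_.enorm (B.mulVec u) := csInf_le hbdd hmem
    have hvu : v = _root_.enorm v • u := by
      rw [hu, smul_smul, mul_inv_cancel₀ (ne_of_gt hc), one_smul]
    have key : _root_.enorm (B.mulVec v) = _root_.enorm v * _root_.enorm (B.mulVec u) := by
      conv_lhs => rw [hvu]
      rw [Matrix.mulVec_smul, enorm_smul', abs_of_pos hc]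
    calc smin B * _root_.enorm v ≤ _root_.enorm (B.mulVec u) * _root_.enorm v :=
          mul_le_mul_of_nonneg_right hle hc.le
      _ = _root_.enorm (B.mulVec v) := by rw [key]; ring

/-- Least squares perturbation, Lötstedt: if `A y = b` with `y ∈ C` convex,
`ỹ` minimizes `‖Ã y' − b̃‖₂` over `C`, and `σ_min(A) > σ_max(F)` where `F = A − Ã`,
then `‖y − ỹ‖₂ ≤ (σ_max(F)‖y‖₂ + ‖e‖₂)/(σ_min(A) − σ_max(F))` where `e = b − b̃`. -/
theorem least_squares_perturbation (T R : ℕ)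
    (A At : Matrix (Fin T) (Fin R) ℝ) (hA : A.rank = R) (hAt : At.rank = R)
    (b bt : Fin T → ℝ)
    (F : Matrix (Fin T) (Fin R) ℝ) (hF : F = A - At)
    (e : Fin T → ℝ) (he : e = b - bt)
    (C : Set (Fin R → ℝ)) (hC : Convex ℝ C)
    (y : Fin R → ℝ) (hy : y ∈ C) (hAy : A.mulVec y = b)
    (yt : Fin R → ℝ) (hyt : yt ∈ C)
    (hmin : ∀ y' ∈ C, _root_.enorm (At.mulVec yt - bt) ≤ _root_.enorm (At.mulVec y' - bt))
    (hσ : smax F < smin A) :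
    _root_.enorm (y - yt) ≤ (smax F * _root_.enorm y + _root_.enorm e) / (smin A - smax F) := by
  have hD : 0 < smin A - smax F := sub_pos.mpr hσ
  set r : Fin T → ℝ := At.mulVec yt - bt with hr
  set d : Fin T → ℝ := At.mulVec y - At.mulVec yt with hd
  -- variational inequality: 0 ≤ ⟨r, d⟩
  have hvar : 0 ≤ dot r d := by
    by_contra h
    push_neg at h
    have hd0 : d ≠ 0 := by
      intro h0; rw [h0] at h; simp [dot] at h
    have hK : 0 < _root_.enorm d ^ 2 := pow_pos (enorm_pos'' hd0) 2
    set θ : ℝ := min 1 (-dot r d / _root_.enorm d ^ 2) with hθ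
    have hθpos : 0 < θ := lt_min one_pos (div_pos (by linarith) hK)
    have hθ1 : θ ≤ 1 := min_le_left _ _
    have hθK : θ * _root_.enorm d ^ 2 ≤ -dot r d := by
      have := min_le_right 1 (-dot r d / _root_.enorm d ^ 2)
      calc θ * _root_.enorm d ^ 2 ≤ (-dot r d / _root_.enorm d ^ 2) * _root_.enorm d ^ 2 :=
            mul_le_mul_of_nonneg_right this hK.le
        _ = -dot r d := div_mul_cancel₀ _ hK.ne'
    set z : Fin R → ℝ := yt + θ • (y - yt) with hz
    have hzC : z ∈ C := by
      have := hC hyt hy (by linarith : (0:ℝ) ≤ 1 - θ) (le_of_lt hθpos) (by ring)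
      convert this using 1
      rw [hz]; ext i; simp [Pi.smul_apply]; ring
    have hzv : At.mulVec z - bt = r + θ • d := by
      rw [hz, Matrix.mulVec_add, Matrix.mulVec_smul, Matrix.mulVec_sub]
      ext i; simp [hr, hd, Pi.smul_apply]; ring
    have h1 : _root_.enorm r ≤ _root_.enorm (r + θ • d) := by
      have := hmin z hzC; rwa [hzv] at this
    have h2 : _root_.enorm r ^ 2 ≤ _root_.enorm (r + θ • d) ^ 2 :=
      pow_le_pow_left₀ (enorm_nonneg' _) h1 2
    rw [expand_sq'] at h2
    have hds : dot r (θ • d) = θ * dot r d := by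
      simp [dot, Pi.smul_apply, Finset.mul_sum]; congr 1; ext i; ring
    rw [hds, enorm_smul', abs_of_pos hθpos, mul_pow] at h2
    nlinarith
  -- key bound : ‖At (y - yt)‖ ≤ ‖At y - bt‖
  have hdsymm : dot d r = dot r d := by
    simp [dot]; congr 1; ext i; ring
  have hdd : dot d (At.mulVec y - bt) = _root_.enorm d ^ 2 + dot d r := by
    rw [enorm_sq', dot, dot]
    rw [← Finset.sum_add_distrib]
    refine Finset.sum_congr rfl fun i _ => ?_
    simp only [hd, hr, Pi.sub_apply]; ring
  have hB : _root_.enorm d ≤ _root_.enorm (At.mulVec y - bt) := by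
    rcases eq_or_lt_of_le (enorm_nonneg' d) with h0 | hpos
    · rw [← h0]; exact enorm_nonneg' _
    · have h3 : _root_.enorm d ^ 2 ≤ _root_.enorm d * _root_.enorm (At.mulVec y - bt) := by
        calc _root_.enorm d ^ 2 ≤ _root_.enorm d ^ 2 + dot d r := by rw [hdsymm]; linarith
          _ = dot d (At.mulVec y - bt) := hdd.symm
          _ ≤ _root_.enorm d * _root_.enorm (At.mulVec y - bt) := dot_le' _ _
      nlinarith
  -- ‖At y - bt‖ ≤ smax F ‖y‖ + ‖e‖
  have hAty : At.mulVec y - bt = e + (-1 : ℝ) • F.mulVec y := by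
    rw [hF, he, Matrix.sub_mulVec, ← hAy]
    ext i
    simp only [Pi.sub_apply, Pi.add_apply, Pi.smul_apply, smul_eq_mul]
    ring
  have hC2 : _root_.enorm (At.mulVec y - bt) ≤ smax F * _root_.enorm y + _root_.enorm e := by
    rw [hAty]
    calc _root_.enorm (e + (-1 : ℝ) • F.mulVec y) ≤ _root_.enorm e + _root_.enorm ((-1 : ℝ) • F.mulVec y) :=
          enorm_add_le' _ _
      _ = _root_.enorm e + _root_.enorm (F.mulVec y) := by rw [enorm_smul']; norm_num
      _ ≤ _root_.enorm e + smax F * _root_.enorm y := by linarith [smax_spec F y]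
      _ = smax F * _root_.enorm y + _root_.enorm e := by ring
  -- lower bound
  have hAeq : A.mulVec (y - yt) = d + F.mulVec (y - yt) := by
    rw [hF, Matrix.sub_mulVec]
    ext i
    simp only [hd, Matrix.mulVec_sub, Pi.sub_apply, Pi.add_apply]
    ring
  have hlow : (smin A - smax F) * _root_.enorm (y - yt) ≤ _root_.enorm d := by
    have h1 : smin A * _root_.enorm (y - yt) ≤ _root_.enorm (A.mulVec (y - yt)) := smin_spec A _
    have h2 : _root_.enorm (A.mulVec (y - yt)) ≤ _root_.enorm d + _root_.enorm (F.mulVec (y - yt)) := by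
      rw [hAeq]; exact enorm_add_le' _ _
    have h3 : _root_.enorm (F.mulVec (y - yt)) ≤ smax F * _root_.enorm (y - yt) := smax_spec F _
    nlinarith
  rw [le_div_iff₀ hD]
  calc _root_.enorm (y - yt) * (smin A - smax F) = (smin A - smax F) * _root_.enorm (y - yt) := by ring
    _ ≤ _root_.enorm d := hlow
    _ ≤ _root_.enorm (At.mulVec y - bt) := hB
    _ ≤ smax F * _root_.enorm y + _root_.enorm e := hC2

end
end
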